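/- arXiv:2001.04452 — 2 statements merged into one kernel-verified Lean document; each statement's English description precedes it below -/
import Mathlib

section
/- Let α ∈ (0,1), let (H, ⟨·,·⟩) be a real inner product space with norm ‖·‖, and let e⁰, e¹, …, e^M ∈ H. Then for every m ∈ {1,…,M}, ⟨δ_t^α e^m, e^m⟩ ≥ (δ_t^α ν^m) · ‖e^m‖, where δ_t^α e^m ∈ H is the L1 operator applied to the H-valued sequence (e^j) and (ν^j) is the real sequence ν^j := ‖e^j‖. -/
open Real MeasureTheory

/-- The L1 discrete Caputo operator of order `α` on the temporal mesh `t`. -/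
noncomputable def deltaL1 (α : ℝ) (t : ℕ → ℝ) (V : ℕ → ℝ) (m : ℕ) : ℝ :=
  (1 / Real.Gamma (1 - α)) *
    ∑ j ∈ Finset.Icc 1 m,
      ((V j - V (j - 1)) / (t j - t (j - 1))) *
        ∫ s in (t (j - 1))..(t j), (t m - s) ^ (-α)
/-- The L1 discrete Caputo operator for sequences with values in a real vector space. -/
noncomputable def deltaL1V {H : Type*} [NormedAddCommGroup H] [NormedSpace ℝ H]
    (α : ℝ) (t : ℕ → ℝ) (V : ℕ → H) (m : ℕ) : H :=
  (1 / Real.Gamma (1 - α)) •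
    ∑ j ∈ Finset.Icc 1 m,
      ((∫ s in (t (j - 1))..(t j), (t m - s) ^ (-α)) / (t j - t (j - 1))) •
        (V j - V (j - 1))

/-- Abel-summation inequality: if `c` is nonnegative at `1` and nondecreasing up to `m`,
and `d` is nonpositive up to `m`, then the sum of `c j * (d j - d (j-1))` dominates
`c m * d m`. -/
lemma abel_ineq (c d : ℕ → ℝ) (m : ℕ) (hm : 1 ≤ m) (hc1 : 0 ≤ c 1)
    (hmono : ∀ j, 1 ≤ j → j < m → c j ≤ c (j + 1))
    (hd : ∀ j, j ≤ m → d j ≤ 0) :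
    c m * d m ≤ ∑ j ∈ Finset.Icc 1 m, c j * (d j - d (j - 1)) := by
  induction m, hm using Nat.le_induction with
  | base =>
    have h0 := hd 0 (by norm_num)
    simp only [Finset.Icc_self, Finset.sum_singleton]
    nlinarith
  | succ n hn ih =>
    rw [Finset.sum_Icc_succ_top (by omega : 1 ≤ n + 1)]
    have h1 := ih (fun j hj hj' => hmono j hj (by omega)) (fun j hj => hd j (by omega))
    have h2 := hmono n hn (by omega)
    have h3 := hd n (by omega)
    have h4 : n + 1 - 1 = n := by omega
    rw [h4]
    nlinarith

open scoped RealInnerProductSpace in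
theorem stmt11
    (α T : ℝ) (hα : α ∈ Set.Ioo (0 : ℝ) 1) (hT : 0 < T)
    (M : ℕ) (hM : 1 ≤ M) (t : ℕ → ℝ)
    (ht0 : t 0 = 0) (htM : t M = T)
    (hmono : ∀ j, j < M → t j < t (j + 1))
    (H : Type*) [NormedAddCommGroup H] [InnerProductSpace ℝ H]
    (e : ℕ → H) :
    ∀ m, 1 ≤ m → m ≤ M →
      ⟪deltaL1V α t e m, e m⟫ ≥ deltaL1 α t (fun j => ‖e j‖) m * ‖e m‖ := by
  obtain ⟨hα0, hα1⟩ := hα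
  have hβ : (0 : ℝ) < 1 - α := by linarith
  -- strict monotonicity of the mesh
  have tmono : ∀ i j : ℕ, i < j → j ≤ M → t i < t j := by
    intro i j hij hjM
    induction j with
    | zero => omega
    | succ n ih =>
      rcases Nat.lt_or_ge i n with h | h
      · exact (ih h (by omega)).trans (hmono n (by omega))
      · have : i = n := by omega
        subst this
        exact hmono i (by omega)
  intro m hm1 hmM
  -- coefficient sequence
  set c : ℕ → ℝ := fun j =>
    (∫ s in (t (j - 1))..(t j), (t m - s) ^ (-α)) / (t j - t (j - 1)) with hc
  -- defect sequence
  set d : ℕ → ℝ := fun j => ⟪e j, e m⟫ - ‖e j‖ * ‖e m‖ with hd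
  -- explicit value of the integrals
  have hint : ∀ j : ℕ, 1 ≤ j → j ≤ m →
      (∫ s in (t (j - 1))..(t j), (t m - s) ^ (-α)) =
        ((t m - t (j - 1)) ^ (1 - α) - (t m - t j) ^ (1 - α)) / (1 - α) := by
    intro j _ _
    rw [intervalIntegral.integral_comp_sub_left (fun x => x ^ (-α)) (t m),
      integral_rpow (Or.inl (by linarith : (-1 : ℝ) < -α))]
    rw [show -α + 1 = 1 - α from by ring]
  -- the coefficients as slopes
  have hslope : ∀ j : ℕ, 1 ≤ j → j ≤ m →
      c j = (((t m - t (j - 1)) ^ (1 - α) - (t m - t j) ^ (1 - α)) /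
        ((t m - t (j - 1)) - (t m - t j))) / (1 - α) := by
    intro j hj1 hjm
    rw [hc]
    simp only
    rw [hint j hj1 hjm]
    have : (t m - t (j - 1)) - (t m - t j) = t j - t (j - 1) := by ring
    rw [this]
    ring
  have hy : ∀ j : ℕ, j ≤ m → 0 ≤ t m - t j := by
    intro j hj
    rcases Nat.lt_or_ge j m with h | h
    · linarith [tmono j m h hmM]
    · have : j = m := by omega
      subst this; linarith
  -- c 1 ≥ 0
  have hc1 : 0 ≤ c 1 := by
    rw [hslope 1 le_rfl hm1]
    have h01 : t 0 < t 1 := tmono 0 1 (by omega) (by omega)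
    have hy1 : 0 ≤ t m - t 1 := hy 1 hm1
    have hle : (t m - t 1) ^ (1 - α) ≤ (t m - t 0) ^ (1 - α) :=
      Real.rpow_le_rpow hy1 (by linarith) (by linarith)
    have hpos : 0 < (t m - t 0) - (t m - t 1) := by
      linarith
    have : (0:ℕ) = 1 - 1 := rfl
    apply div_nonneg _ (by linarith)
    apply div_nonneg
    · simpa using sub_nonneg.mpr hle
    · simpa using hpos.le
  -- c is nondecreasing
  have hcm : ∀ j, 1 ≤ j → j < m → c j ≤ c (j + 1) := by
    intro j hj1 hjm
    rw [hslope j hj1 (by omega), hslope (j + 1) (by omega) (by omega)]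
    have hred : (j + 1) - 1 = j := by omega
    rw [hred]
    set x := t m - t (j + 1) with hx
    set y := t m - t j with hyy
    set z := t m - t (j - 1) with hz
    have hxy : x < y := by
      have := tmono j (j + 1) (by omega) (by omega)
      simp only [hx, hyy]; linarith
    have hyz : y < z := by
      have := tmono (j - 1) j (by omega) (by omega)
      simp only [hyy, hz]; linarith
    have hx0 : (0 : ℝ) ≤ x := hy (j + 1) (by omega)
    have hz0 : (0 : ℝ) ≤ z := le_of_lt (lt_of_le_of_lt (hx0.trans hxy.le) hyz)
    have hconc : ConcaveOn ℝ (Set.Ici 0) fun s : ℝ => s ^ (1 - α) :=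
      (Real.strictConcaveOn_rpow hβ (by linarith)).concaveOn
    have := hconc.slope_anti_adjacent (Set.mem_Ici.mpr hx0) (Set.mem_Ici.mpr hz0) hxy hyz
    exact div_le_div_of_nonneg_right this hβ.le |>.trans_eq rfl
  -- d is nonpositive and d m = 0
  have hdle : ∀ j, j ≤ m → d j ≤ 0 := by
    intro j _
    have := real_inner_le_norm (e j) (e m)
    simp only [hd]; linarith
  have hdm : d m = 0 := by
    simp only [hd, real_inner_self_eq_norm_mul_norm, sub_self]
  -- Gamma positivity
  have hΓ : 0 < Real.Gamma (1 - α) := Real.Gamma_pos_of_pos hβ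
  -- rewrite both sides
  have key : ⟪deltaL1V α t e m, e m⟫ - deltaL1 α t (fun j => ‖e j‖) m * ‖e m‖ =
      (1 / Real.Gamma (1 - α)) * ∑ j ∈ Finset.Icc 1 m, c j * (d j - d (j - 1)) := by
    rw [deltaL1V, deltaL1, real_inner_smul_left, sum_inner]
    rw [mul_comm ((1 / Real.Gamma (1 - α)) * _) ‖e m‖, ← mul_assoc, mul_comm ‖e m‖ _,
      mul_assoc, ← mul_sub, Finset.mul_sum, ← Finset.sum_sub_distrib]
    congr 1
    apply Finset.sum_congr rfl
    intro j hj
    rw [real_inner_smul_left, inner_sub_left]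
    simp only [hc, hd]
    ring
  have habel := abel_ineq c d m hm1 hc1 hcm hdle
  rw [hdm, mul_zero] at habel
  have : 0 ≤ (1 / Real.Gamma (1 - α)) * ∑ j ∈ Finset.Icc 1 m, c j * (d j - d (j - 1)) :=
    mul_nonneg (by positivity) habel
  linarith [key ▸ this]
end

section
/- Let α ∈ (0,1), λ ≥ 0, and let the temporal mesh satisfy λ τ_j^α ≤ 1/Γ(2−α) for all j = 1,…,M. Let Ω_h be a finite nonempty set and, for each m = 1,…,M, let A^{(m)} be a real Ω_h × Ω_h matrix that is a nonsingular M-matrix, i.e. all its off-diagonal entries are ≤ 0 and there exists an entrywise positive vector w with A^{(m)} w entrywise positive. Let f : Ω_h × {1,…,M} × ℝ → ℝ be continuous in its last argument and satisfy f(z,m,s₁) − f(z,m,s₂) ≥ −λ(s₁ − s₂) for all s₁ ≥ s₂, all z ∈ Ω_h and all m. Then: (i) for every u₀ : Ω_h → ℝ there is exactly one family (U^m)_{m=0}^M of vectors U^m : Ω_h → ℝ with U⁰ = u₀ and δ_t^α U^m(z) + (A^{(m)} U^m)(z) + f(z, m, U^m(z)) = 0 for all z ∈ Ω_h and m = 1,…,M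 (δ_t^α applied componentwise); (ii) if a family (Ū^m)_{m=0}^M satisfies Ū⁰ ≥ u₀ componentwise and δ_t^α Ū^m(z) + (A^{(m)} Ū^m)(z) + f(z, m, Ū^m(z)) ≥ 0 for all z ∈ Ω_h and m ≥ 1, then U^m ≤ Ū^m componentwise for all m = 0,…,M; (iii) if a family (U̲^m)_{m=0}^M satisfies the reversed inequalities U̲⁰ ≤ u₀ and δ_t^α U̲^m(z) + (A^{(m)} U̲^m)(z) + f(z, m, U̲^m(z)) ≤ 0, then U̲^m ≤ U^m componentwise for all m = 0,…,M. -/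
open Real MeasureTheory

/-- The explicit L1 coefficients. -/
noncomputable def Kc (α : ℝ) (t : ℕ → ℝ) (m j : ℕ) : ℝ :=
  ((t m - t (j - 1)) ^ (1 - α) - (t m - t j) ^ (1 - α)) /
    (Real.Gamma (1 - α) * (1 - α) * (t j - t (j - 1)))

lemma integral_ker (α : ℝ) (hα : α ∈ Set.Ioo (0:ℝ) 1) (a b c : ℝ) :
    (∫ s in a..b, (c - s) ^ (-α)) =
      ((c - a) ^ (1 - α) - (c - b) ^ (1 - α)) / (1 - α) := by
  have h1 : (∫ s in a..b, (c - s) ^ (-α)) = ∫ x in c - b..c - a, x ^ (-α) :=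
    intervalIntegral.integral_comp_sub_left (fun u => u ^ (-α)) c
  rw [h1, integral_rpow (Or.inl (by linarith [hα.2] : (-1:ℝ) < -α))]
  have : -α + 1 = 1 - α := by ring
  rw [this]

lemma deltaL1_eq (α : ℝ) (hα : α ∈ Set.Ioo (0:ℝ) 1) (t : ℕ → ℝ) (V : ℕ → ℝ) (m : ℕ) :
    deltaL1 α t V m = ∑ j ∈ Finset.Icc 1 m, Kc α t m j * (V j - V (j - 1)) := by
  rw [deltaL1, Finset.mul_sum]
  refine Finset.sum_congr rfl fun j _ => ?_
  rw [integral_ker α hα, Kc]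
  rw [div_eq_mul_inv, div_eq_mul_inv, div_eq_mul_inv, div_eq_mul_inv, mul_inv, mul_inv]
  ring

lemma abel_sum (K V : ℕ → ℝ) : ∀ n : ℕ, 1 ≤ n →
    ∑ j ∈ Finset.Icc 1 n, K j * (V j - V (j - 1)) =
      K n * V n - K 1 * V 0 - ∑ j ∈ Finset.Icc 1 (n - 1), (K (j + 1) - K j) * V j := by
  intro n hn
  induction n, hn using Nat.le_induction with
  | base => simp; ring
  | succ n hn ih =>
    rw [Finset.sum_Icc_succ_top (by omega : 1 ≤ n + 1), ih]
    have h1 : n + 1 - 1 = n := by omega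
    rw [h1]
    have h3 : ∑ j ∈ Finset.Icc 1 n, (K (j + 1) - K j) * V j
        = (∑ j ∈ Finset.Icc 1 (n - 1), (K (j + 1) - K j) * V j) + (K (n + 1) - K n) * V n := by
      obtain ⟨k, rfl⟩ : ∃ k, n = k + 1 := ⟨n - 1, by omega⟩
      rw [Finset.sum_Icc_succ_top (by omega : 1 ≤ k + 1)]
      simp
    rw [h3]
    ring

section KcFacts
variable {α : ℝ} {t : ℕ → ℝ} {M : ℕ}

lemma t_lt (hmono : ∀ j, j < M → t j < t (j + 1)) :
    ∀ i j : ℕ, i < j → j ≤ M → t i < t j := by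
  intro i j hij hjM
  induction j with
  | zero => omega
  | succ k ih =>
    rcases Nat.lt_succ_iff_lt_or_eq.mp hij with h | h
    · exact (ih h (by omega)).trans (hmono k (by omega))
    · subst h; exact hmono i (by omega)

lemma t_le (hmono : ∀ j, j < M → t j < t (j + 1)) {i j : ℕ} (hij : i ≤ j) (hjM : j ≤ M) :
    t i ≤ t j := by
  rcases eq_or_lt_of_le hij with h | h
  · subst h; rfl
  · exact (t_lt hmono i j h hjM).le

lemma Kc_pos (hα : α ∈ Set.Ioo (0:ℝ) 1) (hmono : ∀ j, j < M → t j < t (j + 1))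
    {m j : ℕ} (h1 : 1 ≤ j) (h2 : j ≤ m) (h3 : m ≤ M) : 0 < Kc α t m j := by
  have hβ : 0 < 1 - α := by linarith [hα.2]
  have htj : t (j - 1) < t j := t_lt hmono (j - 1) j (by omega) (by omega)
  have hjm : t j ≤ t m := t_le hmono h2 h3
  have h0 : 0 ≤ t m - t j := by linarith
  have hlt : t m - t j < t m - t (j - 1) := by linarith
  have hnum : (t m - t j) ^ (1 - α) < (t m - t (j - 1)) ^ (1 - α) :=
    Real.rpow_lt_rpow h0 hlt hβ
  have hΓ : 0 < Real.Gamma (1 - α) := Real.Gamma_pos_of_pos hβ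
  exact div_pos (by linarith) (mul_pos (mul_pos hΓ hβ) (by linarith))

lemma Kc_mono (hα : α ∈ Set.Ioo (0:ℝ) 1) (hmono : ∀ j, j < M → t j < t (j + 1))
    {m j : ℕ} (h1 : 1 ≤ j) (h2 : j + 1 ≤ m) (h3 : m ≤ M) :
    Kc α t m j ≤ Kc α t m (j + 1) := by
  have hβ0 : 0 < 1 - α := by linarith [hα.2]
  have hβ1 : 1 - α < 1 := by linarith [hα.1]
  have hΓ : 0 < Real.Gamma (1 - α) := Real.Gamma_pos_of_pos hβ0
  have hG : 0 < Real.Gamma (1 - α) * (1 - α) := mul_pos hΓ hβ0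
  have hcc : ConcaveOn ℝ (Set.Ici 0) (fun x : ℝ => x ^ (1 - α)) :=
    (Real.strictConcaveOn_rpow hβ0 hβ1).concaveOn
  have hx : (0:ℝ) ≤ t m - t (j + 1) := by
    have := t_le hmono h2 h3; linarith
  have hxy : t m - t (j + 1) < t m - t j := by
    have := t_lt hmono j (j + 1) (by omega) (by omega); linarith
  have hyz : t m - t j < t m - t (j - 1) := by
    have := t_lt hmono (j - 1) j (by omega) (by omega); linarith
  have hz : (0:ℝ) ≤ t m - t (j - 1) := by linarith
  have hs := hcc.slope_anti_adjacent (Set.mem_Ici.mpr hx) (Set.mem_Ici.mpr hz) hxy hyz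
  have hzy : (t m - t (j - 1)) - (t m - t j) = t j - t (j - 1) := by ring
  have hyx : (t m - t j) - (t m - t (j + 1)) = t (j + 1) - t j := by ring
  rw [hzy, hyx] at hs
  have hj1 : (j + 1 : ℕ) - 1 = j := by omega
  have e1 : Kc α t m j = ((t m - t (j - 1)) ^ (1 - α) - (t m - t j) ^ (1 - α))
      / (t j - t (j - 1)) / (Real.Gamma (1 - α) * (1 - α)) := by
    rw [Kc, div_div]; ring_nf
  have e2 : Kc α t m (j + 1) = ((t m - t j) ^ (1 - α) - (t m - t (j + 1)) ^ (1 - α))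
      / (t (j + 1) - t j) / (Real.Gamma (1 - α) * (1 - α)) := by
    rw [Kc, hj1, div_div]; ring_nf
  rw [e1, e2]
  gcongr

lemma Kc_diag (hα : α ∈ Set.Ioo (0:ℝ) 1) (hmono : ∀ j, j < M → t j < t (j + 1))
    {m : ℕ} (h1 : 1 ≤ m) (h3 : m ≤ M) :
    Kc α t m m = (t m - t (m - 1)) ^ (-α) / Real.Gamma (2 - α) := by
  have hβ : 0 < 1 - α := by linarith [hα.2]
  have htj : 0 < t m - t (m - 1) := by
    have := t_lt hmono (m - 1) m (by omega) h3; linarith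
  have hG2 : Real.Gamma (2 - α) = (1 - α) * Real.Gamma (1 - α) := by
    have h := Real.Gamma_add_one (by linarith : (1:ℝ) - α ≠ 0)
    rw [show (1:ℝ) - α + 1 = 2 - α by ring] at h
    exact h
  rw [Kc, hG2]
  rw [sub_self, Real.zero_rpow (by linarith : (1:ℝ) - α ≠ 0)]
  rw [show (-α : ℝ) = (1 - α) - 1 by ring, Real.rpow_sub_one (ne_of_gt htj)]
  rw [sub_zero, div_div]
  ring

lemma lam_le_Kc_diag {lam : ℝ} (hα : α ∈ Set.Ioo (0:ℝ) 1) (hlam : 0 ≤ lam)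
    (hmono : ∀ j, j < M → t j < t (j + 1))
    (hmesh : ∀ j, 1 ≤ j → j ≤ M → lam * (t j - t (j - 1)) ^ α ≤ 1 / Real.Gamma (2 - α))
    {m : ℕ} (h1 : 1 ≤ m) (h3 : m ≤ M) : lam ≤ Kc α t m m := by
  have htj : 0 < t m - t (m - 1) := by
    have := t_lt hmono (m - 1) m (by omega) h3; linarith
  have hτα : 0 < (t m - t (m - 1)) ^ α := Real.rpow_pos_of_pos htj α
  have hG2 : 0 < Real.Gamma (2 - α) := Real.Gamma_pos_of_pos (by linarith [hα.2])
  have h := hmesh m h1 h3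
  have e : (t m - t (m - 1)) ^ (-α) / Real.Gamma (2 - α)
      = (1 / Real.Gamma (2 - α)) / (t m - t (m - 1)) ^ α := by
    rw [Real.rpow_neg htj.le, div_div]
    ring
  rw [Kc_diag hα hmono h1 h3, e, le_div_iff₀ hτα]
  exact h

end KcFacts

lemma comparison
    (α lam : ℝ) (hα : α ∈ Set.Ioo (0 : ℝ) 1) (hlam : 0 ≤ lam)
    (M : ℕ) (t : ℕ → ℝ)
    (hmono : ∀ j, j < M → t j < t (j + 1))
    (hmesh : ∀ j, 1 ≤ j → j ≤ M →
      lam * (t j - t (j - 1)) ^ α ≤ 1 / Real.Gamma (2 - α))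
    (X : Type*) [Fintype X] [Nonempty X] [DecidableEq X]
    (A : ℕ → Matrix X X ℝ)
    (hAoff : ∀ m, 1 ≤ m → m ≤ M → ∀ z z' : X, z ≠ z' → A m z z' ≤ 0)
    (hAw : ∀ m, 1 ≤ m → m ≤ M → ∃ w : X → ℝ,
      (∀ z, 0 < w z) ∧ ∀ z, 0 < (A m).mulVec w z)
    (f : X → ℕ → ℝ → ℝ)
    (hfA1 : ∀ z m s₁ s₂, s₂ ≤ s₁ → f z m s₁ - f z m s₂ ≥ -lam * (s₁ - s₂))
    (Ul Ub : ℕ → X → ℝ)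
    (h0 : ∀ z, Ul 0 z ≤ Ub 0 z)
    (hl : ∀ m, 1 ≤ m → m ≤ M → ∀ z,
      deltaL1 α t (fun j => Ul j z) m + (A m).mulVec (Ul m) z + f z m (Ul m z) ≤ 0)
    (hb : ∀ m, 1 ≤ m → m ≤ M → ∀ z,
      0 ≤ deltaL1 α t (fun j => Ub j z) m + (A m).mulVec (Ub m) z + f z m (Ub m z)) :
    ∀ m, m ≤ M → ∀ z, Ul m z ≤ Ub m z := by
  intro m
  induction m using Nat.strong_induction_on with
  | _ m ih =>
    intro hmM
    rcases Nat.eq_zero_or_pos m with hm0 | h1m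
    · subst hm0; exact h0
    by_contra hcon
    push_neg at hcon
    obtain ⟨w, hw, hAww⟩ := hAw m h1m hmM
    set e : ℕ → X → ℝ := fun j z => Ub j z - Ul j z with he
    obtain ⟨z₀, -, hmin⟩ :=
      Finset.exists_min_image Finset.univ (fun z => e m z / w z) Finset.univ_nonempty
    set θ := e m z₀ / w z₀ with hθ
    obtain ⟨z₁, hz₁⟩ := hcon
    have hez₁ : e m z₁ < 0 := by simp [he]; linarith
    have hθneg : θ < 0 :=
      lt_of_le_of_lt (hmin z₁ (Finset.mem_univ _)) (div_neg_of_neg_of_pos hez₁ (hw z₁))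
    have hew : ∀ z, θ * w z ≤ e m z := by
      intro z
      have h := hmin z (Finset.mem_univ z)
      calc θ * w z ≤ (e m z / w z) * w z := by
            exact mul_le_mul_of_nonneg_right h (hw z).le
        _ = e m z := div_mul_cancel₀ _ (hw z).ne'
    have he0 : e m z₀ = θ * w z₀ := (div_mul_cancel₀ _ (hw z₀).ne').symm
    have hIH : ∀ j, j < m → 0 ≤ e j z₀ := by
      intro j hj
      have := ih j hj (le_trans (le_of_lt hj) hmM) z₀
      simp [he]; linarith
    -- the two scheme inequalities at (m, z₀)
    have hl' := hl m h1m hmM z₀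
    have hb' := hb m h1m hmM z₀
    rw [deltaL1_eq α hα] at hl' hb'
    -- difference of the sums
    have hsum : (∑ j ∈ Finset.Icc 1 m, Kc α t m j * (Ub j z₀ - Ub (j - 1) z₀))
        - ∑ j ∈ Finset.Icc 1 m, Kc α t m j * (Ul j z₀ - Ul (j - 1) z₀)
        = ∑ j ∈ Finset.Icc 1 m, Kc α t m j * (e j z₀ - e (j - 1) z₀) := by
      rw [← Finset.sum_sub_distrib]
      exact Finset.sum_congr rfl fun j _ => by simp [he]; ring
    have habel := abel_sum (Kc α t m) (fun j => e j z₀) m h1m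
    have htail : 0 ≤ ∑ j ∈ Finset.Icc 1 (m - 1), (Kc α t m (j + 1) - Kc α t m j) * e j z₀ := by
      apply Finset.sum_nonneg
      intro j hj
      rw [Finset.mem_Icc] at hj
      have hmono' : Kc α t m j ≤ Kc α t m (j + 1) :=
        Kc_mono hα hmono hj.1 (by omega) hmM
      exact mul_nonneg (by linarith) (hIH j (by omega))
    have hhead : 0 ≤ Kc α t m 1 * e 0 z₀ :=
      mul_nonneg (Kc_pos hα hmono le_rfl h1m hmM).le (hIH 0 h1m)
    have hsum_le : ∑ j ∈ Finset.Icc 1 m, Kc α t m j * (e j z₀ - e (j - 1) z₀)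
        ≤ Kc α t m m * e m z₀ := by
      rw [habel]; linarith
    -- difference of the matrix terms
    have hmv : (A m).mulVec (Ub m) z₀ - (A m).mulVec (Ul m) z₀
        = ∑ z', A m z₀ z' * e m z' := by
      simp [Matrix.mulVec, dotProduct, he, ← Finset.sum_sub_distrib]
      exact Finset.sum_congr rfl fun z' _ => by ring
    have hmv_le : ∑ z', A m z₀ z' * e m z' ≤ θ * (A m).mulVec w z₀ := by
      have : ∀ z' ∈ Finset.univ, A m z₀ z' * e m z' ≤ A m z₀ z' * (θ * w z') := by
        intro z' _
        rcases eq_or_ne z' z₀ with h | h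
        · subst h; rw [← he0]
        · exact mul_le_mul_of_nonpos_left (hew z') (hAoff m h1m hmM z₀ z' (Ne.symm h))
      calc ∑ z', A m z₀ z' * e m z' ≤ ∑ z', A m z₀ z' * (θ * w z') :=
            Finset.sum_le_sum this
        _ = θ * (A m).mulVec w z₀ := by
            simp [Matrix.mulVec, dotProduct, Finset.mul_sum]
            exact Finset.sum_congr rfl fun z' _ => by ring
    -- difference of the nonlinear terms
    have hfd : f z₀ m (Ub m z₀) - f z₀ m (Ul m z₀) ≤ -lam * e m z₀ := by
      have hle : Ub m z₀ ≤ Ul m z₀ := by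
        have : e m z₀ < 0 := by
          rw [he0]; exact mul_neg_of_neg_of_pos hθneg (hw z₀)
        simp [he] at this; linarith
      have := hfA1 z₀ m (Ul m z₀) (Ub m z₀) hle
      simp [he]; linarith
    -- assemble the contradiction
    have hKlam : lam ≤ Kc α t m m := lam_le_Kc_diag hα hlam hmono hmesh h1m hmM
    have hemz₀ : e m z₀ < 0 := by
      rw [he0]; exact mul_neg_of_neg_of_pos hθneg (hw z₀)
    have hAwneg : θ * (A m).mulVec w z₀ < 0 :=
      mul_neg_of_neg_of_pos hθneg (hAww z₀)
    have hKe : (Kc α t m m - lam) * e m z₀ ≤ 0 :=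
      mul_nonpos_of_nonneg_of_nonpos (by linarith) hemz₀.le
    nlinarith [hsum_le, hmv, hmv_le, hfd, hl', hb']

/-- Existence of a solution of the single-step nonlinear system
`c • V + A V + f(V) = b` when `c ≥ lam`, `A` is a nonsingular M-matrix and
`s ↦ lam*s + f s` is nondecreasing. -/
lemma step_exists
    (lam c : ℝ) (hlam : 0 ≤ lam) (hclam : lam ≤ c)
    (X : Type*) [Fintype X] [Nonempty X] [DecidableEq X]
    (A : Matrix X X ℝ)
    (hAoff : ∀ z z' : X, z ≠ z' → A z z' ≤ 0)
    (w : X → ℝ) (hw : ∀ z, 0 < w z) (hAw : ∀ z, 0 < A.mulVec w z)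
    (g : X → ℝ → ℝ) (hgc : ∀ z, Continuous (g z))
    (hg1 : ∀ z s₁ s₂, s₂ ≤ s₁ → g z s₁ - g z s₂ ≥ -lam * (s₁ - s₂))
    (b : X → ℝ) :
    ∃ V : X → ℝ, ∀ z, c * V z + A.mulVec V z + g z (V z) = b z := by
  classical
  -- diagonal entries are positive
  have hAd : ∀ z, 0 < A z z := by
    intro z
    have h1 : A.mulVec w z = A z z * w z + ∑ z' ∈ Finset.univ.erase z, A z z' * w z' := by
      rw [Matrix.mulVec, dotProduct,
        ← Finset.add_sum_erase _ _ (Finset.mem_univ z)]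
    have h2 : ∑ z' ∈ Finset.univ.erase z, A z z' * w z' ≤ 0 :=
      Finset.sum_nonpos fun z' hz' =>
        mul_nonpos_of_nonpos_of_nonneg
          (hAoff z z' (Ne.symm (Finset.ne_of_mem_erase hz'))) (hw z').le
    have h3 : 0 < A z z * w z := by have := hAw z; rw [h1] at this; linarith
    by_contra hcon
    push_neg at hcon
    nlinarith [hw z]
  -- the scalar functions s ↦ (c + A z z) s + g z s
  set h : X → ℝ → ℝ := fun z s => (c + A z z) * s + g z s with hh
  have hmonoh : ∀ z, StrictMono (h z) := by
    intro z s₁ s₂ hlt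
    have hgd := hg1 z s₂ s₁ hlt.le
    have := hAd z
    simp only [hh]
    nlinarith
  have hconth : ∀ z, Continuous (h z) :=
    fun z => (continuous_const.mul continuous_id).add (hgc z)
  have hsurj : ∀ z, Function.Surjective (h z) := by
    intro z
    apply (hconth z).surjective
    · apply Filter.tendsto_atTop_mono' Filter.atTop
        (f₁ := fun s => A z z * s + g z 0)
      · filter_upwards [Filter.eventually_ge_atTop (0:ℝ)] with s hs
        have hgd := hg1 z s 0 hs
        simp only [hh]
        nlinarith
      · exact Filter.tendsto_atTop_add_const_right _ _
          (Filter.Tendsto.const_mul_atTop (hAd z) Filter.tendsto_id)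
    · apply Filter.tendsto_atBot_mono' Filter.atBot
        (f₁ := fun s => A z z * s + g z 0)
      · filter_upwards [Filter.eventually_le_atBot (0:ℝ)] with s hs
        have hgd := hg1 z 0 s hs
        simp only [hh]
        nlinarith
      · exact Filter.tendsto_atBot_add_const_right _ _
          (Filter.Tendsto.const_mul_atBot (hAd z) Filter.tendsto_id)
  choose sol hsol using hsurj
  have hsolmono : ∀ z r r', r ≤ r' → sol z r ≤ sol z r' := by
    intro z r r' hrr
    exact (hmonoh z).le_iff_le.mp (by rw [hsol z r, hsol z r']; exact hrr)
  -- the off-diagonal part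
  set offd : (X → ℝ) → X → ℝ := fun V z => ∑ z' ∈ Finset.univ.erase z, A z z' * V z'
    with hoffd
  have hmv : ∀ (V : X → ℝ) z, A.mulVec V z = A z z * V z + offd V z := by
    intro V z
    rw [Matrix.mulVec, dotProduct,
      ← Finset.add_sum_erase _ _ (Finset.mem_univ z)]
  have hoffd_mono : ∀ (V V' : X → ℝ), (∀ z, V z ≤ V' z) → ∀ z, offd V' z ≤ offd V z := by
    intro V V' hVV z
    apply Finset.sum_le_sum
    intro z' hz'
    exact mul_le_mul_of_nonpos_left (hVV z')
      (hAoff z z' (Ne.symm (Finset.ne_of_mem_erase hz')))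
  have hoffd_smul : ∀ (V : X → ℝ) (r : ℝ) z, offd (fun x => r * V x) z = r * offd V z := by
    intro V r z
    simp only [hoffd, Finset.mul_sum]
    exact Finset.sum_congr rfl fun z' _ => by ring
  -- the monotone one-step operator
  set Tm : (X → ℝ) → X → ℝ := fun V z => sol z (b z - offd V z) with hTm
  have hTmono : ∀ (V V' : X → ℝ), (∀ z, V z ≤ V' z) → ∀ z, Tm V z ≤ Tm V' z := by
    intro V V' hVV z
    exact hsolmono z _ _ (by linarith [hoffd_mono V V' hVV z])
  have hfix_eq : ∀ V : X → ℝ, (∀ z, Tm V z = V z) →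
      ∀ z, c * V z + A.mulVec V z + g z (V z) = b z := by
    intro V hV z
    have h1 : h z (V z) = b z - offd V z := by
      rw [← hV z]; exact hsol z _
    rw [hmv V z]
    simp only [hh] at h1
    linarith
  -- a priori bounds
  have hune : (Finset.univ : Finset X).Nonempty := Finset.univ_nonempty
  set s₀ : ℝ := (Finset.univ.sup' hune fun z => |b z - g z 0| / A.mulVec w z) ⊔ 0 with hs₀def
  have hs₀0 : 0 ≤ s₀ := le_sup_right
  have hs₀b : ∀ z, |b z - g z 0| ≤ s₀ * A.mulVec w z := by
    intro z
    have h1 : |b z - g z 0| / A.mulVec w z ≤ s₀ :=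
      le_trans (Finset.le_sup' (fun z => |b z - g z 0| / A.mulVec w z) (Finset.mem_univ z)) le_sup_left
    rw [div_le_iff₀ (hAw z)] at h1
    linarith [h1]
  set hi : X → ℝ := fun z => s₀ * w z with hhi
  set lo : X → ℝ := fun z => -(s₀ * w z) with hlo
  have hlohi : ∀ z, lo z ≤ hi z := by
    intro z; simp only [hhi, hlo]; nlinarith [hw z]
  have hsm_hi : ∀ z, offd hi z = s₀ * offd w z := by
    intro z
    simp only [hhi, hoffd, Finset.mul_sum]
    exact Finset.sum_congr rfl fun z' _ => by ring
  have hsm_lo : ∀ z, offd lo z = -(s₀ * offd w z) := by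
    intro z
    simp only [hlo, hoffd, Finset.mul_sum, ← Finset.sum_neg_distrib]
    exact Finset.sum_congr rfl fun z' _ => by ring
  have hhi_fix : ∀ z, Tm hi z ≤ hi z := by
    intro z
    apply (hmonoh z).le_iff_le.mp
    simp only [hTm]
    rw [hsol]
    have hgd := hg1 z (s₀ * w z) 0 (by nlinarith [hw z])
    have hb1 : b z - g z 0 ≤ s₀ * A.mulVec w z := (abs_le.mp (hs₀b z)).2
    have hmw := hmv w z
    have hcl : 0 ≤ (c - lam) * (s₀ * w z) :=
      mul_nonneg (by linarith) (mul_nonneg hs₀0 (hw z).le)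
    have hgoal : h z (hi z) = (c + A z z) * (s₀ * w z) + g z (s₀ * w z) := by
      simp only [hh, hhi]
    rw [hgoal, hsm_hi z]
    nlinarith
  have hlo_fix : ∀ z, lo z ≤ Tm lo z := by
    intro z
    apply (hmonoh z).le_iff_le.mp
    simp only [hTm]
    rw [hsol]
    have hgd := hg1 z 0 (-(s₀ * w z)) (by nlinarith [hw z])
    have hb1 : -(s₀ * A.mulVec w z) ≤ b z - g z 0 := (abs_le.mp (hs₀b z)).1
    have hmw := hmv w z
    have hcl : 0 ≤ (c - lam) * (s₀ * w z) :=
      mul_nonneg (by linarith) (mul_nonneg hs₀0 (hw z).le)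
    have hgoal : h z (lo z) = (c + A z z) * (-(s₀ * w z)) + g z (-(s₀ * w z)) := by
      simp only [hh, hlo]
    rw [hgoal, hsm_lo z]
    nlinarith
  -- Knaster–Tarski style fixed point
  set S : Set (X → ℝ) :=
    {V | (∀ z, lo z ≤ V z) ∧ (∀ z, V z ≤ hi z) ∧ ∀ z, V z ≤ Tm V z} with hS
  have hloS : lo ∈ S := ⟨fun z => le_rfl, hlohi, hlo_fix⟩
  set u : X → ℝ := fun z => sSup ((fun V : X → ℝ => V z) '' S) with hu
  have hbdd : ∀ z, BddAbove ((fun V : X → ℝ => V z) '' S) := by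
    intro z
    refine ⟨hi z, ?_⟩
    rintro y ⟨V, hV, rfl⟩
    exact hV.2.1 z
  have hne : ∀ z, ((fun V : X → ℝ => V z) '' S).Nonempty :=
    fun z => ⟨lo z, Set.mem_image_of_mem _ hloS⟩
  have hVu : ∀ V ∈ S, ∀ z, V z ≤ u z :=
    fun V hV z => le_csSup (hbdd z) (Set.mem_image_of_mem _ hV)
  have hu_hi : ∀ z, u z ≤ hi z := by
    intro z
    apply csSup_le (hne z)
    rintro y ⟨V, hV, rfl⟩
    exact hV.2.1 z
  have hlo_u : ∀ z, lo z ≤ u z := hVu lo hloS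
  have hu_Tu : ∀ z, u z ≤ Tm u z := by
    intro z
    apply csSup_le (hne z)
    rintro y ⟨V, hV, rfl⟩
    exact (hV.2.2 z).trans (hTmono V u (hVu V hV) z)
  have hTuS : Tm u ∈ S := by
    refine ⟨fun z => ?_, fun z => ?_, fun z => ?_⟩
    · exact (hlo_fix z).trans (hTmono lo u hlo_u z)
    · exact (hTmono u hi hu_hi z).trans (hhi_fix z)
    · exact hTmono u (Tm u) hu_Tu z
  have hTu_u : ∀ z, Tm u z ≤ u z := hVu (Tm u) hTuS
  exact ⟨u, hfix_eq u fun z => le_antisymm (hTu_u z) (hu_Tu z)⟩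

theorem stmt17
    (α T lam : ℝ) (hα : α ∈ Set.Ioo (0 : ℝ) 1) (hT : 0 < T) (hlam : 0 ≤ lam)
    (M : ℕ) (hM : 1 ≤ M) (t : ℕ → ℝ)
    (ht0 : t 0 = 0) (htM : t M = T)
    (hmono : ∀ j, j < M → t j < t (j + 1))
    (hmesh : ∀ j, 1 ≤ j → j ≤ M →
      lam * (t j - t (j - 1)) ^ α ≤ 1 / Real.Gamma (2 - α))
    (X : Type*) [Fintype X] [Nonempty X] [DecidableEq X]
    (A : ℕ → Matrix X X ℝ)
    -- each A m is a nonsingular M-matrix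
    (hAoff : ∀ m, 1 ≤ m → m ≤ M → ∀ z z' : X, z ≠ z' → A m z z' ≤ 0)
    (hAw : ∀ m, 1 ≤ m → m ≤ M → ∃ w : X → ℝ,
      (∀ z, 0 < w z) ∧ ∀ z, 0 < (A m).mulVec w z)
    (f : X → ℕ → ℝ → ℝ)
    (hfc : ∀ z m, Continuous fun s => f z m s)
    (hfA1 : ∀ z m s₁ s₂, s₂ ≤ s₁ → f z m s₁ - f z m s₂ ≥ -lam * (s₁ - s₂))
    (u₀ : X → ℝ) :
    -- (i) existence and uniqueness of the discrete solution
    (∃ U : ℕ → X → ℝ,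
      ((∀ z, U 0 z = u₀ z) ∧
        ∀ m, 1 ≤ m → m ≤ M → ∀ z,
          deltaL1 α t (fun j => U j z) m + (A m).mulVec (U m) z
            + f z m (U m z) = 0) ∧
      ∀ U' : ℕ → X → ℝ,
        ((∀ z, U' 0 z = u₀ z) ∧
          ∀ m, 1 ≤ m → m ≤ M → ∀ z,
            deltaL1 α t (fun j => U' j z) m + (A m).mulVec (U' m) z
              + f z m (U' m z) = 0) →
        ∀ m, m ≤ M → ∀ z, U' m z = U m z) ∧
    -- (ii) every upper solution dominates every solution
    (∀ U : ℕ → X → ℝ,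
      ((∀ z, U 0 z = u₀ z) ∧
        ∀ m, 1 ≤ m → m ≤ M → ∀ z,
          deltaL1 α t (fun j => U j z) m + (A m).mulVec (U m) z
            + f z m (U m z) = 0) →
      ∀ Ub : ℕ → X → ℝ,
        (∀ z, u₀ z ≤ Ub 0 z) →
        (∀ m, 1 ≤ m → m ≤ M → ∀ z,
          0 ≤ deltaL1 α t (fun j => Ub j z) m + (A m).mulVec (Ub m) z
            + f z m (Ub m z)) →
        ∀ m, m ≤ M → ∀ z, U m z ≤ Ub m z) ∧
    -- (iii) every lower solution is dominated by every solution
    (∀ U : ℕ → X → ℝ,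
      ((∀ z, U 0 z = u₀ z) ∧
        ∀ m, 1 ≤ m → m ≤ M → ∀ z,
          deltaL1 α t (fun j => U j z) m + (A m).mulVec (U m) z
            + f z m (U m z) = 0) →
      ∀ Ul : ℕ → X → ℝ,
        (∀ z, Ul 0 z ≤ u₀ z) →
        (∀ m, 1 ≤ m → m ≤ M → ∀ z,
          deltaL1 α t (fun j => Ul j z) m + (A m).mulVec (Ul m) z
            + f z m (Ul m z) ≤ 0) →
        ∀ m, m ≤ M → ∀ z, Ul m z ≤ U m z) := by
  
  classical
  have comp := comparison α lam hα hlam M t hmono hmesh X A hAoff hAw f hfA1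
  -- existence
  have key : ∀ n : ℕ, ∃ W : ℕ → X → ℝ, (∀ z, W 0 z = u₀ z) ∧
      ∀ m, 1 ≤ m → m ≤ n → m ≤ M → ∀ z,
        deltaL1 α t (fun j => W j z) m + (A m).mulVec (W m) z + f z m (W m z) = 0 := by
    intro n
    induction n with
    | zero => exact ⟨fun _ => u₀, fun _ => rfl, fun m h1 h2 _ _ => by omega⟩
    | succ n ihn =>
      obtain ⟨W, hW0, hWeq⟩ := ihn
      by_cases hnM : n + 1 ≤ M
      · have h1n : 1 ≤ n + 1 := by omega
        obtain ⟨wv, hwv, hAwv⟩ := hAw (n + 1) h1n hnM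
        set c := Kc α t (n + 1) (n + 1) with hc
        have hclam : lam ≤ c := lam_le_Kc_diag hα hlam hmono hmesh h1n hnM
        set b : X → ℝ := fun z => c * W n z
          - ∑ j ∈ Finset.Icc 1 n, Kc α t (n + 1) j * (W j z - W (j - 1) z) with hbdef
        obtain ⟨V, hV⟩ := step_exists lam c hlam hclam X (A (n + 1))
          (hAoff (n + 1) h1n hnM) wv hwv hAwv (fun z => f z (n + 1))
          (fun z => hfc z (n + 1)) (fun z => hfA1 z (n + 1)) b
        set W' := Function.update W (n + 1) V with hW'
        have hW'le : ∀ j, j ≤ n → W' j = W j :=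
          fun j hj => Function.update_of_ne (by omega) _ _
        have hW'top : W' (n + 1) = V := Function.update_self _ _ _
        refine ⟨W', ?_, ?_⟩
        · intro z; rw [hW'le 0 (by omega)]; exact hW0 z
        · intro m h1 h2 h3 z
          rcases Nat.lt_succ_iff_lt_or_eq.mp (Nat.lt_succ_of_le h2) with hm | hm
          · have hmn : m ≤ n := by omega
            have e1 : deltaL1 α t (fun j => W' j z) m = deltaL1 α t (fun j => W j z) m := by
              rw [deltaL1_eq α hα, deltaL1_eq α hα]
              refine Finset.sum_congr rfl fun j hj => ?_
              rw [Finset.mem_Icc] at hj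
              rw [hW'le j (by omega), hW'le (j - 1) (by omega)]
            rw [e1, hW'le m hmn]
            exact hWeq m h1 hmn h3 z
          · subst hm
            rw [hW'top]
            have e1 : deltaL1 α t (fun j => W' j z) (n + 1)
                = (∑ j ∈ Finset.Icc 1 n, Kc α t (n + 1) j * (W j z - W (j - 1) z))
                  + c * (V z - W n z) := by
              rw [deltaL1_eq α hα, Finset.sum_Icc_succ_top (by omega : 1 ≤ n + 1)]
              congr 1
              · refine Finset.sum_congr rfl fun j hj => ?_
                rw [Finset.mem_Icc] at hj
                rw [hW'le j (by omega), hW'le (j - 1) (by omega)]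
              · rw [show n + 1 - 1 = n by omega, hW'top, hW'le n (by omega), hc]
            rw [e1]
            have := hV z
            rw [hbdef] at this
            simp only at this
            linarith
      · exact ⟨W, hW0, fun m h1 h2 h3 z => hWeq m h1 (by omega) h3 z⟩
  obtain ⟨U, hU0, hUeq⟩ := key M
  have hUsol : (∀ z, U 0 z = u₀ z) ∧ ∀ m, 1 ≤ m → m ≤ M → ∀ z,
      deltaL1 α t (fun j => U j z) m + (A m).mulVec (U m) z + f z m (U m z) = 0 :=
    ⟨hU0, fun m h1 h2 z => hUeq m h1 h2 h2 z⟩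
  refine ⟨⟨U, hUsol, ?_⟩, ?_, ?_⟩
  · -- uniqueness
    intro U' hU' m hm z
    have h1 : U' m z ≤ U m z := by
      refine comp U' U (fun z => by rw [hU'.1 z, hU0 z])
        (fun m h1 h2 z => le_of_eq (hU'.2 m h1 h2 z))
        (fun m h1 h2 z => ge_of_eq (hUsol.2 m h1 h2 z)) m hm z
    have h2 : U m z ≤ U' m z := by
      refine comp U U' (fun z => by rw [hU'.1 z, hU0 z])
        (fun m h1 h2 z => le_of_eq (hUsol.2 m h1 h2 z))
        (fun m h1 h2 z => ge_of_eq (hU'.2 m h1 h2 z)) m hm z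
    exact le_antisymm h1 h2
  · -- upper solutions dominate
    intro U hUs Ub h0b hbineq m hm z
    exact comp U Ub (fun z => le_of_le_of_eq (le_of_eq (hUs.1 z)) rfl |>.trans (h0b z) |>.trans_eq rfl)
      (fun m h1 h2 z => le_of_eq (hUs.2 m h1 h2 z)) hbineq m hm z
  · -- lower solutions are dominated
    intro U hUs Ul h0l hlineq m hm z
    exact comp Ul U (fun z => (h0l z).trans (le_of_eq (hUs.1 z).symm))
      hlineq (fun m h1 h2 z => ge_of_eq (hUs.2 m h1 h2 z)) m hm z
end
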